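/- arXiv:2011.02349 — 2 statements merged into one kernel-verified Lean document; each statement's English description precedes it below -/
import Mathlib

section
/- Let Ω be a nonempty finite set equipped with the uniform probability measure P and expectation E. Let T : Ω → [0,∞], G : Ω → ℝ with finite range, ξ ∈ [0,1], and let S ⊂ (0,∞) be a finite set of infectious ages. For each τ ∈ S let n^τ, n^{0,τ} : Ω → ℝ≥0, and set N := Σ_{τ∈S} n^τ. Assume for every τ ∈ S: (i) for every g with P(G = g) > 0 and every ρ with P(T = ρ, G = g) > 0, E(n^τ | T = ρ, G = g) = (1 − ξ·1_{ρ ≤ τ})·E(n^{0,τ} | T = ρ, G = g); and (ii) n^{0,τ} and T are conditionally independent given G. Then E(N) = Σ_g P(G = g) · Σ_{τ∈S} (1 − ξ·P(T ≤ τ | G = g))·E(n^{0,τ} | G = g), the outer sum running over g with P(G = g) > 0. -/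
open Finset
open scoped Classical ENNReal NNReal

noncomputable section

variable {Ω : Type*} [Fintype Ω]

/-- Number of elements of `Ω` satisfying `E`, as a real number. -/
def cnt (E : Ω → Prop) : ℝ := ((Finset.univ.filter E).card : ℝ)

/-- The uniform (counting) probability of the event `E`. -/
def pr (E : Ω → Prop) : ℝ := cnt E / (Fintype.card Ω : ℝ)

/-- The conditional probability of the event `E` given the event `C`
(junk value `0` if `C` is empty). -/
def prC (C E : Ω → Prop) : ℝ := cnt (fun ω => C ω ∧ E ω) / cnt C

/-- The expectation of `X` under the uniform probability measure. -/
def expec (X : Ω → ℝ) : ℝ := (∑ ω, X ω) / (Fintype.card Ω : ℝ)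

/-- The conditional expectation of `X` given the event `C`, i.e. the average of `X`
over `C` (junk value `0` if `C` is empty). -/
def expecC (C : Ω → Prop) (X : Ω → ℝ) : ℝ :=
  (∑ ω ∈ Finset.univ.filter C, X ω) / cnt C

end
set_option linter.unusedSectionVars false
set_option linter.unusedVariables false

section helpers

variable {Ω : Type*} [Fintype Ω]

lemma filt_ext (p q : Ω → Prop) [DecidablePred p] [DecidablePred q]
    (h : ∀ ω, p ω ↔ q ω) :
    (Finset.univ.filter p : Finset Ω) = Finset.univ.filter q := by
  ext ω; simp [Finset.mem_filter, h ω]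

lemma cnt_ext (p q : Ω → Prop) (h : ∀ ω, p ω ↔ q ω) : cnt p = cnt q := by
  unfold cnt
  congr 1
  exact_mod_cast congrArg Finset.card (filt_ext p q h)

lemma cnt_eq_card (p : Ω → Prop) [inst : DecidablePred p] :
    cnt p = ((Finset.univ.filter p).card : ℝ) := by
  unfold cnt
  exact_mod_cast congrArg Finset.card
    (@filt_ext Ω _ p p (fun a => Classical.propDecidable (p a)) inst (fun _ => Iff.rfl))

lemma expecC_eq (C : Ω → Prop) [DecidablePred C] (X : Ω → ℝ) :
    expecC C X = (∑ ω ∈ Finset.univ.filter C, X ω) / cnt C := by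
  unfold expecC
  congr 1
  exact Finset.sum_congr
    (@filt_ext Ω _ C C (fun a => Classical.propDecidable (C a)) ‹_› (fun _ => Iff.rfl))
    (fun _ _ => rfl)

lemma sum_fiber {β : Type*} [DecidableEq β] (s : Finset Ω) (f : Ω → β) (X : Ω → ℝ) :
    ∑ ω ∈ s, X ω = ∑ b ∈ s.image f, ∑ ω ∈ s.filter (fun ω => f ω = b), X ω :=
  (Finset.sum_fiberwise_of_maps_to (fun x hx => Finset.mem_image_of_mem f hx) X).symm

lemma sum_coe_fiber (s : Finset Ω) (X : Ω → ℝ≥0) :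
    ∑ ω ∈ s, (X ω : ℝ) =
      ∑ y ∈ Finset.univ.image X, ((s.filter (fun ω => X ω = y)).card : ℝ) * (y : ℝ) := by
  rw [← Finset.sum_fiberwise_of_maps_to
      (fun x (_ : x ∈ s) => Finset.mem_image_of_mem X (Finset.mem_univ x))
      (fun ω => (X ω : ℝ))]
  refine Finset.sum_congr rfl fun y _ => ?_
  have h : ∀ ω ∈ s.filter (fun ω => X ω = y), (X ω : ℝ) = (y : ℝ) := fun ω hω => by
    rw [(Finset.mem_filter.mp hω).2]
  rw [Finset.sum_congr rfl h, Finset.sum_const, nsmul_eq_mul]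

lemma indep_expecC (T : Ω → ℝ≥0∞) (G : Ω → ℝ) (X : Ω → ℝ≥0) (g : ℝ) (ρ : ℝ≥0∞)
    (hA : 0 < cnt (fun ω => G ω = g))
    (hB : 0 < cnt (fun ω => T ω = ρ ∧ G ω = g))
    (hci : ∀ (y : ℝ≥0) (ρ' : ℝ≥0∞),
      prC (fun ω => G ω = g) (fun ω => X ω = y ∧ T ω = ρ') =
        prC (fun ω => G ω = g) (fun ω => X ω = y) *
          prC (fun ω => G ω = g) (fun ω => T ω = ρ')) :
    expecC (fun ω => T ω = ρ ∧ G ω = g) (fun ω => (X ω : ℝ)) =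
      expecC (fun ω => G ω = g) (fun ω => (X ω : ℝ)) := by
  have hAne : cnt (fun ω => G ω = g) ≠ 0 := ne_of_gt hA
  have hBne : cnt (fun ω => T ω = ρ ∧ G ω = g) ≠ 0 := ne_of_gt hB
  have hBρ : cnt (fun ω => G ω = g ∧ T ω = ρ) = cnt (fun ω => T ω = ρ ∧ G ω = g) :=
    cnt_ext _ _ (fun ω => and_comm)
  have hcnt : ∀ y : ℝ≥0,
      cnt (fun ω => G ω = g ∧ X ω = y ∧ T ω = ρ) =
        cnt (fun ω => G ω = g ∧ X ω = y) * cnt (fun ω => T ω = ρ ∧ G ω = g) /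
          cnt (fun ω => G ω = g) := by
    intro y
    have h := hci y ρ
    unfold prC at h
    rw [hBρ] at h
    rw [eq_div_iff hAne]
    have h2 : (cnt (fun ω => G ω = g ∧ X ω = y ∧ T ω = ρ) * cnt (fun ω => G ω = g)) *
        cnt (fun ω => G ω = g) =
        (cnt (fun ω => G ω = g ∧ X ω = y) * cnt (fun ω => T ω = ρ ∧ G ω = g)) *
          cnt (fun ω => G ω = g) := by
      field_simp at h
      linear_combination (cnt (fun ω => G ω = g)) * h
    exact mul_right_cancel₀ hAne h2
  have eBset : ∀ y : ℝ≥0,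
      (Finset.univ.filter (fun ω => T ω = ρ ∧ G ω = g)).filter (fun ω => X ω = y) =
        Finset.univ.filter (fun ω => G ω = g ∧ X ω = y ∧ T ω = ρ) := by
    intro y
    rw [Finset.filter_filter]
    refine filt_ext _ _ fun ω => ?_
    tauto
  have eAset : ∀ y : ℝ≥0,
      (Finset.univ.filter (fun ω => G ω = g)).filter (fun ω => X ω = y) =
        Finset.univ.filter (fun ω => G ω = g ∧ X ω = y) := by
    intro y
    rw [Finset.filter_filter]
  have eB : ∑ ω ∈ Finset.univ.filter (fun ω => T ω = ρ ∧ G ω = g), (X ω : ℝ) =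
      (∑ ω ∈ Finset.univ.filter (fun ω => G ω = g), (X ω : ℝ)) *
        (cnt (fun ω => T ω = ρ ∧ G ω = g) / cnt (fun ω => G ω = g)) := by
    rw [sum_coe_fiber, sum_coe_fiber, Finset.sum_mul]
    refine Finset.sum_congr rfl fun y _ => ?_
    have h1 : (((Finset.univ.filter (fun ω => T ω = ρ ∧ G ω = g)).filter
        (fun ω => X ω = y)).card : ℝ) = cnt (fun ω => G ω = g ∧ X ω = y ∧ T ω = ρ) := by
      rw [eBset y]; exact (cnt_eq_card _).symm
    have h2 : (((Finset.univ.filter (fun ω => G ω = g)).filter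
        (fun ω => X ω = y)).card : ℝ) = cnt (fun ω => G ω = g ∧ X ω = y) := by
      rw [eAset y]; exact (cnt_eq_card _).symm
    rw [h1, h2, hcnt y]
    ring
  rw [expecC_eq, expecC_eq, eB]
  field_simp

end helpers
section step2

variable {Ω : Type*} [Fintype Ω]

lemma group_sum [Nonempty Ω] (T : Ω → ℝ≥0∞) (G : Ω → ℝ) (ξ : ℝ) (τ : ℝ≥0)
    (nnτ nn0τ : Ω → ℝ≥0) (g : ℝ) (hA : 0 < cnt (fun ω => G ω = g))
    (hsup : ∀ ρ : ℝ≥0∞, 0 < pr (fun ω => T ω = ρ ∧ G ω = g) →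
      expecC (fun ω => T ω = ρ ∧ G ω = g) (fun ω => (nnτ ω : ℝ)) =
        (1 - ξ * (if ρ ≤ (τ : ℝ≥0∞) then (1 : ℝ) else 0)) *
          expecC (fun ω => T ω = ρ ∧ G ω = g) (fun ω => (nn0τ ω : ℝ)))
    (hind : ∀ ρ : ℝ≥0∞, 0 < cnt (fun ω => T ω = ρ ∧ G ω = g) →
      expecC (fun ω => T ω = ρ ∧ G ω = g) (fun ω => (nn0τ ω : ℝ)) =
        expecC (fun ω => G ω = g) (fun ω => (nn0τ ω : ℝ))) :
    ∑ ω ∈ Finset.univ.filter (fun ω => G ω = g), (nnτ ω : ℝ) =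
      (cnt (fun ω => G ω = g) - ξ * cnt (fun ω => G ω = g ∧ T ω ≤ (τ : ℝ≥0∞))) *
        expecC (fun ω => G ω = g) (fun ω => (nn0τ ω : ℝ)) := by
  have hcard : (0 : ℝ) < (Fintype.card Ω : ℝ) := by exact_mod_cast Fintype.card_pos
  set A : Finset Ω := Finset.univ.filter (fun ω => G ω = g) with hAdef
  have hfib : ∀ ρ : ℝ≥0∞, A.filter (fun ω => T ω = ρ) =
      Finset.univ.filter (fun ω => T ω = ρ ∧ G ω = g) := by
    intro ρ
    rw [hAdef, Finset.filter_filter]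
    refine filt_ext _ _ fun ω => ?_
    tauto
  have key : ∀ ρ ∈ A.image T,
      ∑ ω ∈ A.filter (fun ω => T ω = ρ), (nnτ ω : ℝ) =
        (cnt (fun ω => T ω = ρ ∧ G ω = g) *
          (1 - ξ * (if ρ ≤ (τ : ℝ≥0∞) then (1 : ℝ) else 0))) *
          expecC (fun ω => G ω = g) (fun ω => (nn0τ ω : ℝ)) := by
    intro ρ hρ
    have hne : (Finset.univ.filter (fun ω => T ω = ρ ∧ G ω = g)).Nonempty := by
      obtain ⟨ω, hω, hTω⟩ := Finset.mem_image.mp hρ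
      rw [hAdef] at hω
      exact ⟨ω, Finset.mem_filter.mpr ⟨Finset.mem_univ ω, hTω,
        (Finset.mem_filter.mp hω).2⟩⟩
    have hBpos : 0 < cnt (fun ω => T ω = ρ ∧ G ω = g) := by
      rw [cnt_eq_card]; exact_mod_cast Finset.card_pos.mpr hne
    have hprB : 0 < pr (fun ω => T ω = ρ ∧ G ω = g) := div_pos hBpos hcard
    have e1 : ∑ ω ∈ A.filter (fun ω => T ω = ρ), (nnτ ω : ℝ) =
        cnt (fun ω => T ω = ρ ∧ G ω = g) *
          expecC (fun ω => T ω = ρ ∧ G ω = g) (fun ω => (nnτ ω : ℝ)) := by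
      rw [hfib ρ, expecC_eq]
      field_simp
    rw [e1, hsup ρ hprB, hind ρ hBpos]
    ring
  have htot : ∑ ρ ∈ A.image T, cnt (fun ω => T ω = ρ ∧ G ω = g) =
      cnt (fun ω => G ω = g) := by
    have h1 := sum_fiber A T (fun _ => (1 : ℝ))
    simp only [Finset.sum_const, nsmul_eq_mul, mul_one] at h1
    calc ∑ ρ ∈ A.image T, cnt (fun ω => T ω = ρ ∧ G ω = g)
        = ∑ ρ ∈ A.image T, ((A.filter (fun ω => T ω = ρ)).card : ℝ) := by
          refine Finset.sum_congr rfl fun ρ _ => ?_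
          rw [cnt_eq_card, hfib ρ]
      _ = (A.card : ℝ) := h1.symm
      _ = cnt (fun ω => G ω = g) := by rw [hAdef]; exact (cnt_eq_card _).symm
  have hmaps : ∀ ω ∈ Finset.univ.filter (fun ω => G ω = g ∧ T ω ≤ (τ : ℝ≥0∞)),
      T ω ∈ A.image T := by
    intro ω hω
    refine Finset.mem_image_of_mem T ?_
    rw [hAdef]
    exact Finset.mem_filter.mpr ⟨Finset.mem_univ ω, ((Finset.mem_filter.mp hω).2).1⟩
  have hle : ∑ ρ ∈ A.image T,
      (if ρ ≤ (τ : ℝ≥0∞) then (1 : ℝ) else 0) * cnt (fun ω => T ω = ρ ∧ G ω = g) =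
      cnt (fun ω => G ω = g ∧ T ω ≤ (τ : ℝ≥0∞)) := by
    have h1 := Finset.sum_fiberwise_of_maps_to hmaps (fun _ => (1 : ℝ))
    simp only [Finset.sum_const, nsmul_eq_mul, mul_one] at h1
    calc ∑ ρ ∈ A.image T,
        (if ρ ≤ (τ : ℝ≥0∞) then (1 : ℝ) else 0) * cnt (fun ω => T ω = ρ ∧ G ω = g)
        = ∑ ρ ∈ A.image T,
            (((Finset.univ.filter (fun ω => G ω = g ∧ T ω ≤ (τ : ℝ≥0∞))).filter
              (fun ω => T ω = ρ)).card : ℝ) := by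
          refine Finset.sum_congr rfl fun ρ _ => ?_
          by_cases hρτ : ρ ≤ (τ : ℝ≥0∞)
          · have hset : (Finset.univ.filter
                (fun ω => G ω = g ∧ T ω ≤ (τ : ℝ≥0∞))).filter (fun ω => T ω = ρ) =
                Finset.univ.filter (fun ω => T ω = ρ ∧ G ω = g) := by
              rw [Finset.filter_filter]
              refine filt_ext _ _ fun ω => ?_
              constructor
              · rintro ⟨⟨h1', _⟩, h3⟩; exact ⟨h3, h1'⟩
              · rintro ⟨h1', h2'⟩; exact ⟨⟨h2', h1' ▸ hρτ⟩, h1'⟩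
            rw [if_pos hρτ, one_mul, cnt_eq_card, hset]
          · have hset : (Finset.univ.filter
                (fun ω => G ω = g ∧ T ω ≤ (τ : ℝ≥0∞))).filter (fun ω => T ω = ρ) = ∅ := by
              rw [Finset.filter_filter]
              refine Finset.filter_false_of_mem (fun ω _ => ?_)
              rintro ⟨⟨_, h2'⟩, h3'⟩
              exact hρτ (h3' ▸ h2')
            rw [if_neg hρτ, zero_mul, hset]
            simp
      _ = ((Finset.univ.filter (fun ω => G ω = g ∧ T ω ≤ (τ : ℝ≥0∞))).card : ℝ) := h1
      _ = cnt (fun ω => G ω = g ∧ T ω ≤ (τ : ℝ≥0∞)) := (cnt_eq_card _).symm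
  rw [sum_fiber A T (fun ω => (nnτ ω : ℝ)), Finset.sum_congr rfl key, ← Finset.sum_mul]
  congr 1
  have hsplit : ∑ ρ ∈ A.image T,
      cnt (fun ω => T ω = ρ ∧ G ω = g) *
        (1 - ξ * (if ρ ≤ (τ : ℝ≥0∞) then (1 : ℝ) else 0)) =
      (∑ ρ ∈ A.image T, cnt (fun ω => T ω = ρ ∧ G ω = g)) -
        ξ * ∑ ρ ∈ A.image T,
          (if ρ ≤ (τ : ℝ≥0∞) then (1 : ℝ) else 0) * cnt (fun ω => T ω = ρ ∧ G ω = g) := by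
    rw [Finset.mul_sum, ← Finset.sum_sub_distrib]
    exact Finset.sum_congr rfl fun ρ _ => by ring
  rw [hsplit, htot, hle]

end step2
/-- suppression formula for the reproduction number.
`S ⊂ (0,∞)` is a finite set of infectious ages; for each `τ ∈ S`, `nn τ` counts the
people infected at infectious age `τ` and `nn0 τ` the same in the absence of isolation
measures; `N = Σ_{τ∈S} nn τ`.  Under the suppression hypothesis by severity and
conditional independence of `nn0 τ` and `T` given `G` (for every `τ ∈ S`),
`E(N) = Σ_g P(G = g) · Σ_{τ∈S} (1 − ξ·P(T ≤ τ | G = g))·E(nn0 τ | G = g)`. -/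
theorem statement_3 {Ω : Type*} [Fintype Ω] [Nonempty Ω]
    (T : Ω → ℝ≥0∞) (G : Ω → ℝ) (ξ : ℝ) (hξ0 : 0 ≤ ξ) (hξ1 : ξ ≤ 1)
    (S : Finset ℝ≥0) (hS : ∀ τ ∈ S, 0 < τ)
    (nn nn0 : ℝ≥0 → Ω → ℝ≥0)
    (hsup : ∀ τ ∈ S, ∀ g : ℝ, 0 < pr (fun ω => G ω = g) →
      ∀ ρ : ℝ≥0∞, 0 < pr (fun ω => T ω = ρ ∧ G ω = g) →
        expecC (fun ω => T ω = ρ ∧ G ω = g) (fun ω => (nn τ ω : ℝ)) =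
          (1 - ξ * (if ρ ≤ (τ : ℝ≥0∞) then (1 : ℝ) else 0)) *
            expecC (fun ω => T ω = ρ ∧ G ω = g) (fun ω => (nn0 τ ω : ℝ)))
    (hci : ∀ τ ∈ S, ∀ g : ℝ, 0 < pr (fun ω => G ω = g) →
      ∀ (y : ℝ≥0) (ρ : ℝ≥0∞),
        prC (fun ω => G ω = g) (fun ω => nn0 τ ω = y ∧ T ω = ρ) =
          prC (fun ω => G ω = g) (fun ω => nn0 τ ω = y) *
            prC (fun ω => G ω = g) (fun ω => T ω = ρ)) :
    expec (fun ω => ∑ τ ∈ S, (nn τ ω : ℝ)) =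
      ∑ g ∈ Finset.univ.image G,
        pr (fun ω => G ω = g) *
          ∑ τ ∈ S,
            (1 - ξ * prC (fun ω => G ω = g) (fun ω => T ω ≤ (τ : ℝ≥0∞))) *
              expecC (fun ω => G ω = g) (fun ω => (nn0 τ ω : ℝ)) := by
  classical
  have hcard : (0 : ℝ) < (Fintype.card Ω : ℝ) := by exact_mod_cast Fintype.card_pos
  have hApos : ∀ g ∈ Finset.univ.image G, 0 < cnt (fun ω => G ω = g) := by
    intro g hg
    obtain ⟨ω, _, rfl⟩ := Finset.mem_image.mp hg
    have : (Finset.univ.filter (fun ω' => G ω' = G ω)).Nonempty :=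
      ⟨ω, Finset.mem_filter.mpr ⟨Finset.mem_univ ω, rfl⟩⟩
    unfold cnt; exact_mod_cast Finset.card_pos.mpr this
  have main : ∀ g ∈ Finset.univ.image G, ∀ τ ∈ S,
      ∑ ω ∈ Finset.univ.filter (fun ω => G ω = g), (nn τ ω : ℝ) =
        (cnt (fun ω => G ω = g) - ξ * cnt (fun ω => G ω = g ∧ T ω ≤ (τ : ℝ≥0∞))) *
          expecC (fun ω => G ω = g) (fun ω => (nn0 τ ω : ℝ)) := by
    intro g hg τ hτ
    have hA := hApos g hg
    have hprG : 0 < pr (fun ω => G ω = g) := div_pos hA hcard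
    exact group_sum T G ξ τ (nn τ) (nn0 τ) g hA
      (fun ρ hρ => hsup τ hτ g hprG ρ hρ)
      (fun ρ hρ => indep_expecC T G (nn0 τ) g ρ hA hρ (hci τ hτ g hprG))
  have e2 : ∀ τ ∈ S, ∑ ω : Ω, (nn τ ω : ℝ) =
      ∑ g ∈ Finset.univ.image G,
        (cnt (fun ω => G ω = g) - ξ * cnt (fun ω => G ω = g ∧ T ω ≤ (τ : ℝ≥0∞))) *
          expecC (fun ω => G ω = g) (fun ω => (nn0 τ ω : ℝ)) := by
    intro τ hτ
    rw [sum_fiber Finset.univ G (fun ω => (nn τ ω : ℝ))]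
    exact Finset.sum_congr rfl fun g hg => main g hg τ hτ
  unfold expec
  rw [Finset.sum_comm, Finset.sum_congr rfl e2, Finset.sum_comm, Finset.sum_div]
  refine Finset.sum_congr rfl fun g hg => ?_
  have hA := hApos g hg
  unfold pr prC expecC
  rw [Finset.sum_div, Finset.mul_sum]
  refine Finset.sum_congr rfl fun τ _ => ?_
  have hAne : cnt (fun ω => G ω = g) ≠ 0 := ne_of_gt hA
  have hcne : (Fintype.card Ω : ℝ) ≠ 0 := ne_of_gt hcard
  field_simp
end

section
/- In the epidemic setting with severity, let X : Ω → ℝ be any function, let t ∈ ℝ with Ω_t nonempty, and let x ∈ ℝ. Define X̌(ω) := X(σ(ω)) − τ^σ(ω) for ω ∈ Ω_{>0}. Then #Ω_t · P_t({ω ∈ Ω_t : X̌(ω) = x}) = Σ_{τ > 0} Σ_{g} Σ_{ω' ∈ Ω_{t−τ,g}, X(ω') = x + τ} n^τ(ω'); equivalently, P_t(X̌_t = x) = Σ_{τ > 0} Σ_g P_{t−τ,g}(X = x + τ)·E_{P_{t−τ,g}}(n^τ | X = x + τ)·(#Ω_{t−τ,g}/#Ω_t), where g ranges over the (finite) range of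 G, and terms with empty conditioning events are understood to vanish. -/
open Finset
open scoped Classical ENNReal NNReal

noncomputable section

variable {Ω : Type*} [Fintype Ω]

/-- `ninf tI σ τ ω` is the number of people infected by `ω` exactly at `ω`'s infectious
age `τ`: the number of `ω' ∈ Ω_{>0}` with `σ ω' = ω` and generation time `τ^σ ω' = τ`. -/
def ninf (tI : Ω → ℝ) (σ : Ω → Ω) (τ : ℝ) (ω : Ω) : ℝ :=
  cnt (fun ω' => 0 < tI ω' ∧ σ ω' = ω ∧ tI ω' - tI (σ ω') = τ)

/-- The (finitely many) positive times `τ` such that `Ω_{t-τ}` is nonempty. -/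
def genTimes (tI : Ω → ℝ) (t : ℝ) : Finset ℝ :=
  (Finset.univ.image (fun ω' => t - tI ω')).filter (fun τ => 0 < τ)

end


noncomputable section
variable {Ω : Type*} [Fintype Ω]

lemma cnt_eq_zero_iff' (E : Ω → Prop) : cnt E = 0 ↔ ∀ ω, ¬ E ω := by
  simp [cnt, Finset.card_eq_zero, Finset.filter_eq_empty_iff]

lemma cnt_congr {A B : Ω → Prop} (h : ∀ ω, A ω ↔ B ω) : cnt A = cnt B :=
  congrArg cnt (funext fun ω => propext (h ω))

lemma cnt_mono {A B : Ω → Prop} (h : ∀ ω, B ω → A ω) : cnt B ≤ cnt A := by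
  have hsub : Finset.univ.filter B ⊆ Finset.univ.filter A := by
    intro ω hω
    simp only [Finset.mem_filter] at *
    exact ⟨hω.1, h ω hω.2⟩
  unfold cnt
  exact_mod_cast Finset.card_le_card hsub

lemma cnt_nonneg (E : Ω → Prop) : 0 ≤ cnt E := by
  unfold cnt; positivity

end

/-- Epidemic setting with severity `G : Ω → ℝ` (finite range,
`Ω_{t,g} = {ω ∈ Ω_t : G ω = g}`).  With `X̌(ω) := X(σ(ω)) − τ^σ(ω)` on `Ω_{>0}`:
`#Ω_t · P_t(X̌_t = x) = Σ_{τ>0} Σ_g Σ_{ω' ∈ Ω_{t−τ,g}, X ω' = x+τ} n^τ(ω')`, and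
equivalently
`P_t(X̌_t = x) = Σ_{τ>0} Σ_g P_{t−τ,g}(X = x+τ)·E_{P_{t−τ,g}}(n^τ | X = x+τ)·(#Ω_{t−τ,g}/#Ω_t)`,
`g` ranging over the (finite) range of `G`; terms with empty conditioning events vanish. -/
theorem statement_6 {Ω : Type*} [Fintype Ω] (tI : Ω → ℝ) (σ : Ω → Ω)
    (hσ : ∀ ω, 0 < tI ω → tI (σ ω) < tI ω)
    (G : Ω → ℝ) (X : Ω → ℝ) (t : ℝ)
    (hne : (Finset.univ.filter (fun ω => tI ω = t)).Nonempty) (x : ℝ) :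
    cnt (fun ω => tI ω = t) *
        prC (fun ω => tI ω = t)
          (fun ω => 0 < tI ω ∧ X (σ ω) - (tI ω - tI (σ ω)) = x) =
      ∑ τ ∈ genTimes tI t, ∑ g ∈ Finset.univ.image G,
        ∑ ω' ∈ Finset.univ.filter
            (fun ω' => tI ω' = t - τ ∧ G ω' = g ∧ X ω' = x + τ),
          ninf tI σ τ ω'
    ∧
    prC (fun ω => tI ω = t)
        (fun ω => 0 < tI ω ∧ X (σ ω) - (tI ω - tI (σ ω)) = x) =
      ∑ τ ∈ genTimes tI t, ∑ g ∈ Finset.univ.image G,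
        prC (fun ω => tI ω = t - τ ∧ G ω = g) (fun ω => X ω = x + τ) *
          expecC (fun ω => tI ω = t - τ ∧ G ω = g ∧ X ω = x + τ) (ninf tI σ τ) *
          (cnt (fun ω => tI ω = t - τ ∧ G ω = g) / cnt (fun ω => tI ω = t)) := by
  classical
  have hCne : cnt (fun ω => tI ω = t) ≠ 0 := by
    intro h
    rw [cnt_eq_zero_iff'] at h
    obtain ⟨ω, hω⟩ := hne
    exact h ω (Finset.mem_filter.1 hω).2
  -- the set of "checked" individuals
  set S : Finset Ω := Finset.univ.filter
      (fun ω => tI ω = t ∧ 0 < tI ω ∧ X (σ ω) - (tI ω - tI (σ ω)) = x) with hS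
  -- collapse the g-sum
  have hg : ∀ τ : ℝ,
      (∑ g ∈ Finset.univ.image G,
        ∑ ω' ∈ Finset.univ.filter
            (fun ω' => tI ω' = t - τ ∧ G ω' = g ∧ X ω' = x + τ),
          ninf tI σ τ ω')
      = ∑ ω' ∈ Finset.univ.filter (fun ω' => tI ω' = t - τ ∧ X ω' = x + τ),
          ninf tI σ τ ω' := by
    intro τ
    rw [← Finset.sum_fiberwise_of_maps_to
        (g := G) (t := Finset.univ.image G)
        (s := Finset.univ.filter (fun ω' => tI ω' = t - τ ∧ X ω' = x + τ))
        (fun ω _ => Finset.mem_image_of_mem G (Finset.mem_univ ω)) (ninf tI σ τ)]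
    refine Finset.sum_congr rfl fun g _ => Finset.sum_congr ?_ fun _ _ => rfl
    ext ω
    simp only [Finset.mem_filter, Finset.mem_univ, true_and, Finset.filter_filter]
    tauto
  -- inner sum over ω' is a fiber count
  have hinner : ∀ τ ∈ genTimes tI t,
      (∑ ω' ∈ Finset.univ.filter (fun ω' => tI ω' = t - τ ∧ X ω' = x + τ),
          ninf tI σ τ ω')
      = ((S.filter (fun ω => tI ω - tI (σ ω) = τ)).card : ℝ) := by
    intro τ hτ
    have hmap : ∀ ω ∈ S.filter (fun ω => tI ω - tI (σ ω) = τ),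
        σ ω ∈ Finset.univ.filter (fun ω' => tI ω' = t - τ ∧ X ω' = x + τ) := by
      intro ω hω
      simp only [hS, Finset.mem_filter, Finset.mem_univ, true_and] at hω ⊢
      obtain ⟨⟨ht, hpos, hx⟩, hτω⟩ := hω
      constructor
      · linarith
      · linarith
    rw [Finset.card_eq_sum_card_fiberwise hmap]
    push_cast
    refine Finset.sum_congr rfl fun ω' hω' => ?_
    simp only [Finset.mem_filter, Finset.mem_univ, true_and] at hω'
    obtain ⟨ht', hx'⟩ := hω'
    unfold ninf cnt
    norm_cast
    congr 1
    ext ω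
    simp only [hS, Finset.mem_filter, Finset.mem_univ, true_and]
    constructor
    · rintro ⟨hpos, hσω, hτω⟩
      rw [hσω] at hτω
      refine ⟨⟨⟨by linarith, hpos, ?_⟩, ?_⟩, hσω⟩
      · rw [hσω]; linarith
      · rw [hσω]; exact hτω
    · rintro ⟨⟨⟨ht, hpos, hx2⟩, hτω⟩, hσω⟩
      exact ⟨hpos, hσω, hτω⟩
  -- partition S by generation time
  have hpart : (S.card : ℝ)
      = ∑ τ ∈ genTimes tI t, ((S.filter (fun ω => tI ω - tI (σ ω) = τ)).card : ℝ) := by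
    have hmap : ∀ ω ∈ S, tI ω - tI (σ ω) ∈ genTimes tI t := by
      intro ω hω
      simp only [hS, Finset.mem_filter, Finset.mem_univ, true_and] at hω
      obtain ⟨ht, hpos, -⟩ := hω
      have := hσ ω hpos
      simp only [genTimes, Finset.mem_filter, Finset.mem_image, Finset.mem_univ, true_and]
      exact ⟨⟨σ ω, by linarith⟩, by linarith⟩
    rw [Finset.card_eq_sum_card_fiberwise hmap]
    push_cast
    rfl
  -- main counting identity
  have key : cnt (fun ω => tI ω = t ∧
      (0 < tI ω ∧ X (σ ω) - (tI ω - tI (σ ω)) = x)) =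
      ∑ τ ∈ genTimes tI t, ∑ g ∈ Finset.univ.image G,
        ∑ ω' ∈ Finset.univ.filter
            (fun ω' => tI ω' = t - τ ∧ G ω' = g ∧ X ω' = x + τ),
          ninf tI σ τ ω' := by
    have hc : cnt (fun ω => tI ω = t ∧
        (0 < tI ω ∧ X (σ ω) - (tI ω - tI (σ ω)) = x)) = (S.card : ℝ) := by
      unfold cnt
      norm_cast
    rw [hc, hpart]
    refine Finset.sum_congr rfl fun τ hτ => ?_
    rw [hg τ, hinner τ hτ]
  have part1 : cnt (fun ω => tI ω = t) *
      prC (fun ω => tI ω = t)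
        (fun ω => 0 < tI ω ∧ X (σ ω) - (tI ω - tI (σ ω)) = x) =
      ∑ τ ∈ genTimes tI t, ∑ g ∈ Finset.univ.image G,
        ∑ ω' ∈ Finset.univ.filter
            (fun ω' => tI ω' = t - τ ∧ G ω' = g ∧ X ω' = x + τ),
          ninf tI σ τ ω' := by
    rw [prC, mul_comm, div_mul_cancel₀ _ hCne]
    exact key
  refine ⟨part1, ?_⟩
  -- second form
  have hpr : prC (fun ω => tI ω = t)
      (fun ω => 0 < tI ω ∧ X (σ ω) - (tI ω - tI (σ ω)) = x) =
      (∑ τ ∈ genTimes tI t, ∑ g ∈ Finset.univ.image G,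
        ∑ ω' ∈ Finset.univ.filter
            (fun ω' => tI ω' = t - τ ∧ G ω' = g ∧ X ω' = x + τ),
          ninf tI σ τ ω') / cnt (fun ω => tI ω = t) := by
    rw [prC, key]
  rw [hpr, Finset.sum_div]
  refine Finset.sum_congr rfl fun τ _ => ?_
  rw [Finset.sum_div]
  refine Finset.sum_congr rfl fun g _ => ?_
  have hcntB : cnt (fun ω => (tI ω = t - τ ∧ G ω = g) ∧ X ω = x + τ)
      = cnt (fun ω => tI ω = t - τ ∧ G ω = g ∧ X ω = x + τ) :=
    cnt_congr (fun ω => by tauto)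
  by_cases hB : cnt (fun ω => tI ω = t - τ ∧ G ω = g ∧ X ω = x + τ) = 0
  · have hP : ∀ ω, ¬(tI ω = t - τ ∧ G ω = g ∧ X ω = x + τ) :=
      (cnt_eq_zero_iff' _).1 hB
    have hSf0 : (∑ ω' ∈ Finset.univ.filter
        (fun ω' => tI ω' = t - τ ∧ G ω' = g ∧ X ω' = x + τ),
        ninf tI σ τ ω') = 0 :=
      Finset.sum_eq_zero fun ω hω => absurd (Finset.mem_filter.1 hω).2 (hP ω)
    have hexp : expecC (fun ω => tI ω = t - τ ∧ G ω = g ∧ X ω = x + τ)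
        (ninf tI σ τ) = 0 := by
      rw [expecC, hB, div_zero]
    rw [hSf0, hexp]
    ring
  · have hA : cnt (fun ω => tI ω = t - τ ∧ G ω = g) ≠ 0 := by
      have hle := cnt_mono (B := fun ω => tI ω = t - τ ∧ G ω = g ∧ X ω = x + τ)
        (A := fun ω => tI ω = t - τ ∧ G ω = g) (fun ω h => ⟨h.1, h.2.1⟩)
      have hBpos : 0 < cnt (fun ω => tI ω = t - τ ∧ G ω = g ∧ X ω = x + τ) :=
        lt_of_le_of_ne (cnt_nonneg _) (Ne.symm hB)
      linarith
    have hsum : (∑ ω ∈ Finset.univ.filter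
          (fun ω => tI ω = t - τ ∧ G ω = g ∧ X ω = x + τ), ninf tI σ τ ω)
        = ∑ ω' ∈ Finset.univ.filter
          (fun ω' => tI ω' = t - τ ∧ G ω' = g ∧ X ω' = x + τ), ninf tI σ τ ω' := rfl
    rw [prC, expecC, hcntB]
    rw [div_mul_div_comm, div_mul_div_comm]
    rw [div_eq_div_iff (by positivity) ?hden]
    case hden =>
      have h1 : 0 < cnt (fun ω => tI ω = t - τ ∧ G ω = g ∧ X ω = x + τ) :=
        lt_of_le_of_ne (cnt_nonneg _) (Ne.symm hB)
      have h2 : 0 < cnt (fun ω => tI ω = t - τ ∧ G ω = g) :=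
        lt_of_le_of_ne (cnt_nonneg _) (Ne.symm hA)
      have h3 : 0 < cnt (fun ω => tI ω = t) :=
        lt_of_le_of_ne (cnt_nonneg _) (Ne.symm hCne)
      positivity
    ring
end
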